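/- Let X be a compact topological space, X_0 ⊂ X an open subset, f : X → X a homeomorphism, and p_+, p_- ∈ X \ X_0 two distinct points with the following properties: (a) there is a basis of open neighbourhoods U^+ of p_+ with f(closure(U^+)) ⊂ U^+ and f^k(x) → p_+ for all x ∈ U^+; (b) there is a basis of open neighbourhoods U^- of p_- with f^{-1}(closure(U^-)) ⊂ U^- and f^{-k}(x) → p_- for all x ∈ U^-; (c) every point q ∈ X \ X_0 with q ≠ p_- satisfies f^l(q) = p_+ for some l ≥ 0. If x ∈ X_0 is such that the forward orbit {f^n(x) : n ≥ 0} has no accumulation point in X_0, then f^n(x) → p_+. -/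

import Mathlib

/-- Let `X` be a compact Hausdorff space, `X₀ ⊆ X` open and invariant under a
homeomorphism `f`, and `p₊ ≠ p₋` two points of `X \ X₀` such that: `p₊` has a basis of
open neighbourhoods `U` with `f(cl U) ⊆ U` on which all forward orbits converge to `p₊`;
`p₋` has a basis of open neighbourhoods `U` with `f⁻¹(cl U) ⊆ U` on which all backward
orbits converge to `p₋`; and every `q ∈ X \ X₀` with `q ≠ p₋` satisfies `fˡ(q) = p₊` for
some `l ≥ 0`. If `x ∈ X₀` and the forward orbit of `x` has no accumulation point in
`X₀`, then `fⁿ(x) → p₊`. -/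
theorem forward_orbit_tendsto_attracting_point {X : Type*} [TopologicalSpace X]
    [CompactSpace X] [T2Space X] (X₀ : Set X) (hX₀ : IsOpen X₀)
    (f : X ≃ₜ X) (hfX₀ : f '' X₀ = X₀)
    (pp pm : X) (hpp : pp ∈ X₀ᶜ) (hpm : pm ∈ X₀ᶜ) (hne : pp ≠ pm)
    (ha : ∀ W ∈ nhds pp, ∃ U ∈ nhds pp, IsOpen U ∧ U ⊆ W ∧
      f '' closure U ⊆ U ∧
      ∀ x ∈ U, Filter.Tendsto (fun k : ℕ => (⇑f)^[k] x) Filter.atTop (nhds pp))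
    (hb : ∀ W ∈ nhds pm, ∃ U ∈ nhds pm, IsOpen U ∧ U ⊆ W ∧
      (⇑f.symm) '' closure U ⊆ U ∧
      ∀ x ∈ U, Filter.Tendsto (fun k : ℕ => (⇑f.symm)^[k] x) Filter.atTop (nhds pm))
    (hc : ∀ q ∈ X₀ᶜ, q ≠ pm → ∃ l : ℕ, (⇑f)^[l] q = pp)
    (x : X) (hx : x ∈ X₀)
    (hacc : ¬ ∃ y ∈ X₀, MapClusterPt y Filter.atTop (fun n : ℕ => (⇑f)^[n] x)) :
    Filter.Tendsto (fun n : ℕ => (⇑f)^[n] x) Filter.atTop (nhds pp) := by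
  -- attracting neighbourhood of pp
  obtain ⟨U, hUnhds, hUopen, -, hUinv, hUtend⟩ := ha Set.univ Filter.univ_mem
  -- key step: if the orbit ever enters U, we are done
  have key : ∀ N : ℕ, (⇑f)^[N] x ∈ U →
      Filter.Tendsto (fun n : ℕ => (⇑f)^[n] x) Filter.atTop (nhds pp) := by
    intro N hN
    have h1 : Filter.Tendsto (fun k : ℕ => (⇑f)^[k + N] x) Filter.atTop (nhds pp) := by
      have := hUtend _ hN
      simpa [Function.iterate_add_apply] using this
    exact (Filter.tendsto_add_atTop_iff_nat N).mp h1
  -- pm is not a cluster point: choose a repelling nbhd V with x ∉ V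
  have hxpm : x ≠ pm := fun h => hpm (h ▸ hx)
  obtain ⟨W, hWnhds, hxW⟩ : ∃ W ∈ nhds pm, x ∉ W := by
    obtain ⟨W, hW, hWo, hpmW⟩ := mem_nhds_iff.mp (isOpen_ne.mem_nhds hxpm.symm : {y | y ≠ x} ∈ nhds pm)
    exact ⟨W, hWo.mem_nhds hpmW, fun h => (hW h) rfl⟩
  obtain ⟨V, hVnhds, hVopen, hVW, hVinv, -⟩ := hb W hWnhds
  have horbV : ∀ n : ℕ, (⇑f)^[n] x ∉ V := by
    intro n
    induction n with
    | zero => exact fun h => hxW (hVW h)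
    | succ n ih =>
      intro h
      have : f.symm ((⇑f)^[n+1] x) ∈ V := hVinv ⟨_, subset_closure h, rfl⟩
      rw [Function.iterate_succ_apply'] at this
      simp at this
      exact ih this
  -- there is a cluster point of the orbit
  obtain ⟨q, hq⟩ := exists_clusterPt_of_compactSpace
    (Filter.map (fun n : ℕ => (⇑f)^[n] x) Filter.atTop)
  have hqcl : MapClusterPt q Filter.atTop (fun n : ℕ => (⇑f)^[n] x) := hq
  -- q ∉ X₀ by hacc
  have hqX₀ : q ∈ X₀ᶜ := fun h => hacc ⟨q, h, hqcl⟩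
  -- q ≠ pm since orbit avoids V
  have hqpm : q ≠ pm := by
    rintro rfl
    have := (mapClusterPt_iff_frequently.mp hqcl) V hVnhds
    obtain ⟨n, hn⟩ := this.exists
    exact horbV n hn
  obtain ⟨l, hl⟩ := hc q hqX₀ hqpm
  -- pp is a cluster point of n ↦ f^[l] (f^[n] x) = f^[n+l] x
  have hppcl : MapClusterPt pp Filter.atTop (fun n : ℕ => (⇑f)^[l] ((⇑f)^[n] x)) := by
    have := hqcl.continuousAt_comp ((f.continuous.iterate l).continuousAt (x := q))
    rwa [hl] at this
  obtain ⟨n, hn⟩ := ((mapClusterPt_iff_frequently.mp hppcl) U hUnhds).exists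
  rw [← Function.iterate_add_apply] at hn
  exact key _ hn
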